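/- (Orthogonality obstruction to surjectivity of the differential of the mixing map, bipartite case.) Let A_{j1} : Matrix (Fin n₁) (Fin n₁) ℂ and A_{j2} : Matrix (Fin n₂) (Fin n₂) ℂ (j = 1,…,k) be Hermitian. Suppose there exists a nonzero Hermitian B with trace(B · A_{j1}) = 0 for all j, and a nonzero Hermitian C with trace C = 0 and trace(C · A_{j2}) = 0 for all j. Then the Kronecker product B ⊗ C is nonzero, Hermitian, has trace 0, and satisfies trace((B ⊗ C) · V) = 0 for every V in the ℝ-linear span of the set {H ⊗ A_{j2} : H Hermitian n₁×n₁, 1 ≤ j ≤ k} ∪ {A_{j1} ⊗ H' : H' Hermitian n₂×n₂, 1 ≤ j ≤ k}. (This span contains the image of the differential of the length-k mixing function at the point determined by the A_{ji}, so that differential is not onto.) -/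
import Mathlib


open scoped Kronecker

/-- orthogonality obstruction, bipartite case: if the Hermitian matrix `B ≠ 0`
is trace-orthogonal to all `A₁ j` and the traceless Hermitian matrix `C ≠ 0` is
trace-orthogonal to all `A₂ j`, then `B ⊗ C` is nonzero, Hermitian, traceless, and
trace-orthogonal to the real span of `{H ⊗ A₂ j} ∪ {A₁ j ⊗ H'}` (hence the differential of
the length-`k` mixing function is not onto). -/
theorem kronecker_orthogonality_obstruction {n₁ n₂ k : ℕ}
    (A₁ : Fin k → Matrix (Fin n₁) (Fin n₁) ℂ) (A₂ : Fin k → Matrix (Fin n₂) (Fin n₂) ℂ)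
    (hA₁ : ∀ j, (A₁ j).IsHermitian) (hA₂ : ∀ j, (A₂ j).IsHermitian)
    (B : Matrix (Fin n₁) (Fin n₁) ℂ) (hB : B.IsHermitian) (hB0 : B ≠ 0)
    (hBorth : ∀ j, (B * A₁ j).trace = 0)
    (C : Matrix (Fin n₂) (Fin n₂) ℂ) (hC : C.IsHermitian) (hC0 : C ≠ 0)
    (hCtr : C.trace = 0) (hCorth : ∀ j, (C * A₂ j).trace = 0) :
    B ⊗ₖ C ≠ 0 ∧ (B ⊗ₖ C).IsHermitian ∧ (B ⊗ₖ C).trace = 0 ∧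
      ∀ V ∈ Submodule.span ℝ
        ({M : Matrix (Fin n₁ × Fin n₂) (Fin n₁ × Fin n₂) ℂ |
            ∃ (H : Matrix (Fin n₁) (Fin n₁) ℂ) (j : Fin k), H.IsHermitian ∧ M = H ⊗ₖ A₂ j} ∪
         {M : Matrix (Fin n₁ × Fin n₂) (Fin n₁ × Fin n₂) ℂ |
            ∃ (H' : Matrix (Fin n₂) (Fin n₂) ℂ) (j : Fin k), H'.IsHermitian ∧ M = A₁ j ⊗ₖ H'}),
        ((B ⊗ₖ C) * V).trace = 0 := by
  refine ⟨?_, ?_, ?_, ?_⟩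
  · intro h
    obtain ⟨i, j, hij⟩ : ∃ i j, B i j ≠ 0 := by
      by_contra hc; push_neg at hc
      exact hB0 (by ext i j; simpa using hc i j)
    obtain ⟨i', j', hij'⟩ : ∃ i j, C i j ≠ 0 := by
      by_contra hc; push_neg at hc
      exact hC0 (by ext i j; simpa using hc i j)
    have := congrFun (congrFun h (i, i')) (j, j')
    simp [Matrix.kroneckerMap_apply] at this
    rcases this with h1 | h1
    exacts [hij h1, hij' h1]
  · ext ⟨x₁, x₂⟩ ⟨y₁, y₂⟩
    simp only [Matrix.conjTranspose_apply, Matrix.kroneckerMap_apply, star_mul']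
    rw [← Matrix.conjTranspose_apply, ← Matrix.conjTranspose_apply, hB.eq, hC.eq, mul_comm]
  · rw [Matrix.trace_kronecker, hCtr, mul_zero]
  · intro V hV
    induction hV using Submodule.span_induction with
    | mem x hx =>
      rcases hx with ⟨H, j, hH, rfl⟩ | ⟨H', j, hH', rfl⟩
      · rw [← Matrix.mul_kronecker_mul, Matrix.trace_kronecker, hCorth, mul_zero]
      · rw [← Matrix.mul_kronecker_mul, Matrix.trace_kronecker, hBorth, zero_mul]
    | zero => simp
    | add x y _ _ hx hy => rw [Matrix.mul_add, Matrix.trace_add, hx, hy, add_zero]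
    | smul r x _ hx =>
      rw [Matrix.mul_smul, Matrix.trace_smul, hx, smul_zero]
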